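/- Let α > 0, and for x ∈ ℝ set h₊(x) = e^{√(2α) x} and h₋(x) = e^{-√(2α) x}. Suppose c₊ ∈ L²(ℝ, h₊² dx) and define c₋(x) = c₊(x) h₊(x)² - 2√(2α) ∫_{-∞}^x c₊(z) h₊(z)² dz. Then c₋ ∈ L²(ℝ, h₋² dx), with ‖c₋ h₋‖_{L²} ≤ 3 ‖c₊ h₊‖_{L²}. -/

import Mathlib

open MeasureTheory Set

lemma expIic {b : ℝ} (hb : 0 < b) (x : ℝ) :
    IntegrableOn (fun z => Real.exp (b * z)) (Iic x) volume ∧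
    ∫ z in Iic x, Real.exp (b * z) = Real.exp (b * x) / b := by
  have key : (Iic x).indicator (fun z => Real.exp (b * z))
      = fun z => (Iic (b * x)).indicator Real.exp (b * z) := by
    funext z
    by_cases h : z ≤ x
    · simp only [Set.indicator_apply, mem_Iic, if_pos h, if_pos ((mul_le_mul_iff_right₀ hb).2 h)]
    · have h' : ¬ b * z ≤ b * x := fun hc => h (le_of_mul_le_mul_left hc hb)
      simp only [Set.indicator_apply, mem_Iic, if_neg h, if_neg h']
  have hint : Integrable ((Iic (b * x)).indicator Real.exp) volume :=
    (integrable_indicator_iff measurableSet_Iic).2 (integrableOn_exp_Iic (b * x))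
  constructor
  · rw [← integrable_indicator_iff measurableSet_Iic, key]
    exact hint.comp_mul_left' hb.ne'
  · rw [← integral_indicator measurableSet_Iic, key,
      MeasureTheory.Measure.integral_comp_mul_left (fun u => (Iic (b * x)).indicator Real.exp u) b,
      integral_indicator measurableSet_Iic, integral_exp_Iic,
      abs_of_pos (inv_pos.2 hb), smul_eq_mul]
    ring

lemma expIoi {b : ℝ} (hb : 0 < b) (z : ℝ) :
    IntegrableOn (fun x => Real.exp (-(b * x))) (Ioi z) volume ∧
    ∫ x in Ioi z, Real.exp (-(b * x)) = Real.exp (-(b * z)) / b := by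
  have key : (Ioi z).indicator (fun x => Real.exp (-(b * x)))
      = fun x => (Iio (-(b * z))).indicator Real.exp (-b * x) := by
    funext x
    by_cases h : z < x
    · have h2 : -(b * x) < -(b * z) := by nlinarith
      simp only [Set.indicator_apply, mem_Ioi, mem_Iio, if_pos h, neg_mul, if_pos h2]
    · have h' : ¬ (-(b * x) < -(b * z)) := by push_neg at h ⊢; nlinarith
      simp only [Set.indicator_apply, mem_Ioi, mem_Iio, if_neg h, neg_mul, if_neg h']
  have hint : Integrable ((Iio (-(b * z))).indicator Real.exp) volume :=
    (integrable_indicator_iff measurableSet_Iio).2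
      ((integrableOn_exp_Iic (-(b * z))).mono_set Iio_subset_Iic_self)
  constructor
  · rw [← integrable_indicator_iff measurableSet_Ioi, key]
    exact hint.comp_mul_left' (neg_ne_zero.2 hb.ne')
  · rw [← integral_indicator measurableSet_Ioi, key,
      MeasureTheory.Measure.integral_comp_mul_left (fun u => (Iio (-(b * z))).indicator Real.exp u) (-b),
      integral_indicator measurableSet_Iio]
    have h1 : ∫ u in Iio (-(b*z)), Real.exp u = ∫ u in Iic (-(b*z)), Real.exp u :=
      setIntegral_congr_set Iio_ae_eq_Iic
    rw [h1, integral_exp_Iic, smul_eq_mul, abs_inv, abs_neg, abs_of_pos hb]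
    ring
open scoped ENNReal NNReal

lemma sqCS {μ : Measure ℝ} {A B : ℝ → ℝ≥0∞} (hA : AEMeasurable A μ) (hB : AEMeasurable B μ) :
    (∫⁻ z, (A z) ^ (1/2:ℝ) * (B z) ^ (1/2:ℝ) ∂μ) ^ 2
      ≤ (∫⁻ z, A z ∂μ) * (∫⁻ z, B z ∂μ) := by
  have h := ENNReal.lintegral_mul_norm_pow_le hA hB (by norm_num : (0:ℝ) ≤ 1/2)
    (by norm_num : (0:ℝ) ≤ 1/2) (by norm_num)
  calc (∫⁻ z, (A z) ^ (1/2:ℝ) * (B z) ^ (1/2:ℝ) ∂μ) ^ 2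
      ≤ ((∫⁻ z, A z ∂μ) ^ (1/2:ℝ) * (∫⁻ z, B z ∂μ) ^ (1/2:ℝ)) ^ 2 :=
        pow_le_pow_left' h 2
    _ = (∫⁻ z, A z ∂μ) * (∫⁻ z, B z ∂μ) := by
        rw [mul_pow, ← ENNReal.rpow_natCast ((∫⁻ z, A z ∂μ) ^ (1/2:ℝ)) 2,
          ← ENNReal.rpow_natCast ((∫⁻ z, B z ∂μ) ^ (1/2:ℝ)) 2,
          ← ENNReal.rpow_mul, ← ENNReal.rpow_mul]
        norm_num

lemma sqrtIntSq {u : ℝ → ℝ} (hu : AEStronglyMeasurable u volume) :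
    Real.sqrt (∫ x, u x ^ 2) = (eLpNorm u 2 volume).toReal := by
  have h1 : ∫ x, u x ^ 2 = (∫⁻ x, ENNReal.ofReal (u x ^ 2)).toReal :=
    integral_eq_lintegral_of_nonneg_ae (Filter.Eventually.of_forall fun x => sq_nonneg _)
      ((hu.mul hu).congr (Filter.Eventually.of_forall fun x => (sq (u x)).symm))
  have h2 : ∀ x : ℝ, ENNReal.ofReal (u x ^ 2) = (‖u x‖₊ : ℝ≥0∞) ^ (2:ℝ) := by
    intro x
    rw [show ((2:ℝ)) = ((2:ℕ):ℝ) by norm_num, ENNReal.rpow_natCast]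
    rw [← sq_abs, ENNReal.ofReal_pow (abs_nonneg _), ← Real.enorm_eq_ofReal_abs, enorm_eq_nnnorm]
  have h3 : (∫⁻ x, ENNReal.ofReal (u x ^ 2)) = ∫⁻ x, (‖u x‖₊ : ℝ≥0∞) ^ (2:ℝ) :=
    lintegral_congr h2
  rw [h1, Real.sqrt_eq_rpow, ENNReal.toReal_rpow, h3,
    eLpNorm_eq_lintegral_rpow_enorm_toReal (by norm_num) (by norm_num), ENNReal.toReal_ofNat]
  rfl

lemma eLpNormTwo (u : ℝ → ℝ) :
    eLpNorm u 2 volume = (∫⁻ z, ((‖u z‖₊ : ℝ≥0∞))^2)^(1/2:ℝ) := by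
  rw [eLpNorm_eq_lintegral_rpow_enorm_toReal (by norm_num) (by norm_num), ENNReal.toReal_ofNat]
  congr 1
  refine lintegral_congr fun z => ?_
  rw [show ((2:ℝ)) = ((2:ℕ):ℝ) by norm_num, ENNReal.rpow_natCast]
  rfl

theorem stmt_5 (α : ℝ) (hα : 0 < α)
    (hp hm : ℝ → ℝ)
    (hhp : ∀ x, hp x = Real.exp (Real.sqrt (2*α) * x))
    (hhm : ∀ x, hm x = Real.exp (-(Real.sqrt (2*α)) * x))
    (cp : ℝ → ℝ) (hcp : MemLp (fun x => cp x * hp x) 2 (volume : Measure ℝ))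
    (cm : ℝ → ℝ)
    (hcm : ∀ x, cm x = cp x * (hp x)^2
      - 2 * Real.sqrt (2*α) * ∫ z in Iic x, cp z * (hp z)^2) :
    MemLp (fun x => cm x * hm x) 2 (volume : Measure ℝ) ∧
      Real.sqrt (∫ x : ℝ, (cm x * hm x)^2) ≤ 3 * Real.sqrt (∫ x : ℝ, (cp x * hp x)^2) := by
  have hβ : 0 < Real.sqrt (2*α) := Real.sqrt_pos.2 (by linarith)
  set β := Real.sqrt (2*α) with hβdef
  set f : ℝ → ℝ := fun x => cp x * hp x with hfdef
  have hF : ∀ z, cp z * (hp z)^2 = f z * Real.exp (β * z) := by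
    intro z; simp only [hfdef, hhp z]; ring
  -- integrability of f·exp(β·) on each Iic x
  have hFint : ∀ x : ℝ, IntegrableOn (fun z => f z * Real.exp (β * z)) (Iic x) volume := by
    intro x
    have hc : Continuous fun z : ℝ => Real.exp (β * z) := by continuity
    have hexp2 : MemLp (fun z => Real.exp (β * z)) 2 (volume.restrict (Iic x)) := by
      refine (memLp_two_iff_integrable_sq hc.aestronglyMeasurable.restrict).2 ?_
      have h2 := (expIic (by linarith : 0 < 2*β) x).1
      refine h2.congr (Filter.Eventually.of_forall fun z => ?_)
      show Real.exp (2*β*z) = Real.exp (β*z)^2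
      rw [sq, ← Real.exp_add]; congr 1; ring
    have h1 : MemLp f 2 (volume.restrict (Iic x)) := hcp.restrict _
    have h2 : MemLp ((fun z => Real.exp (β * z)) • f) 1 (volume.restrict (Iic x)) :=
      h1.smul hexp2
    refine (memLp_one_iff_integrable.1 h2).congr (Filter.Eventually.of_forall fun z => ?_)
    simp [mul_comm]
  set g : ℝ → ℝ := fun x => 2*β*Real.exp (-(β*x)) * ∫ z in Iic x, f z * Real.exp (β*z)
    with hgdef
  have hfg : ∀ x, cm x * hm x = f x - g x := by
    intro x
    have hexp1 : Real.exp (β*x) * Real.exp (-(β*x)) = 1 := by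
      rw [← Real.exp_add, add_neg_cancel, Real.exp_zero]
    have hI : (∫ z in Iic x, cp z * (hp z)^2) = ∫ z in Iic x, f z * Real.exp (β*z) :=
      integral_congr_ae (Filter.Eventually.of_forall fun z => hF z)
    rw [hcm x, hhm x, hI, hF x, hgdef, neg_mul, sub_mul, mul_assoc, hexp1, mul_one]
    ring
  -- measurable representative
  obtain ⟨f', hf'm, hff'⟩ := hcp.1
  set φ : ℝ → ℝ≥0∞ := fun z => (‖f' z‖₊ : ℝ≥0∞) ^ 2 with hφdef
  have hφmeas : Measurable φ := (hf'm.measurable.nnnorm.coe_nnreal_ennreal).pow_const 2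
  have hfφ : ∀ᵐ z ∂(volume : Measure ℝ), ((‖f z‖₊ : ℝ≥0∞))^2 = φ z :=
    hff'.mono fun z hz => by rw [hφdef]; simp only [hz]
  -- continuity of g
  have hgcont : Continuous g := by
    have hii : ∀ a b : ℝ, IntervalIntegrable (fun z => f z * Real.exp (β*z)) volume a b := by
      intro a b
      exact ((hFint (max a b)).mono_set (fun x hx => le_trans hx.2 le_rfl)).intervalIntegrable
    have hprim := intervalIntegral.continuous_primitive hii 0
    have hH : ∀ x, (∫ z in Iic x, f z * Real.exp (β*z))
        = (∫ z in Iic 0, f z * Real.exp (β*z)) + ∫ z in (0:ℝ)..x, f z * Real.exp (β*z) := by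
      intro x
      have := intervalIntegral.integral_Iic_sub_Iic (hFint 0) (hFint x)
      linarith
    have hcont2 : Continuous fun x : ℝ => 2*β*Real.exp (-(β*x)) *
        ((∫ z in Iic 0, f z * Real.exp (β*z)) + ∫ z in (0:ℝ)..x, f z * Real.exp (β*z)) := by
      exact (by fun_prop : Continuous fun x : ℝ => 2*β*Real.exp (-(β*x))).mul
        (continuous_const.add hprim)
    exact hcont2.congr fun x => by rw [← hH x]
  set K : ℝ → ℝ → ℝ≥0∞ :=
    fun x z => if z ≤ x then ENNReal.ofReal (4*β*Real.exp (β*(z-x))) * φ z else 0 with hKdef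
  -- Step A : pointwise bound
  have stepA : ∀ x : ℝ, ((‖g x‖₊ : ℝ≥0∞)) ^ 2 ≤ ∫⁻ z, K x z := by
    intro x
    set A : ℝ → ℝ≥0∞ := fun z => ENNReal.ofReal (Real.exp (β*z)) with hAdef
    have hAmeas : Measurable A := by fun_prop
    have hc0 : 0 ≤ 2*β*Real.exp (-(β*x)) := by positivity
    have e1 : (‖g x‖₊ : ℝ≥0∞)
        = ENNReal.ofReal (2*β*Real.exp (-(β*x))) * ‖∫ z in Iic x, f z * Real.exp (β*z)‖₊ := by
      rw [show g x = (2*β*Real.exp (-(β*x))) * ∫ z in Iic x, f z * Real.exp (β*z) from rfl,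
        nnnorm_mul, ENNReal.coe_mul, ← enorm_eq_nnnorm (2*β*Real.exp (-(β*x))), Real.enorm_eq_ofReal hc0]
    have e2 : ((‖∫ z in Iic x, f z * Real.exp (β*z)‖₊ : ℝ≥0∞))
        ≤ ∫⁻ z in Iic x, A z ^ (1/2:ℝ) * (A z * φ z) ^ (1/2:ℝ) := by
      refine (enorm_integral_le_lintegral_enorm _).trans (le_of_eq ?_)
      refine lintegral_congr_ae (ae_restrict_of_ae (hff'.mono fun z hz => ?_))
      show (‖f z * Real.exp (β*z)‖₊ : ℝ≥0∞) = A z ^ (1/2:ℝ) * (A z * φ z) ^ (1/2:ℝ)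
      have h3 : A z ^ (1/2:ℝ) * (A z * φ z) ^ (1/2:ℝ) = ((A z * (A z * φ z)))^(1/2:ℝ) :=
        (ENNReal.mul_rpow_of_nonneg _ _ (by norm_num)).symm
      have h4 : A z * (A z * φ z) = (A z * ((‖f' z‖₊ : ℝ≥0∞))) ^ 2 := by
        simp only [hφdef]; ring
      rw [h3, h4, ← ENNReal.rpow_natCast (A z * ((‖f' z‖₊ : ℝ≥0∞))) 2, ← ENNReal.rpow_mul]
      have h5 : ((2:ℕ):ℝ) * (1/2) = 1 := by norm_num
      rw [h5, ENNReal.rpow_one, nnnorm_mul, ENNReal.coe_mul, hz,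
        ← enorm_eq_nnnorm (Real.exp (β*z)), Real.enorm_eq_ofReal (Real.exp_pos _).le, mul_comm]
    have e3 : (∫⁻ z in Iic x, A z) = ENNReal.ofReal (Real.exp (β*x)/β) := by
      rw [← ofReal_integral_eq_lintegral_ofReal (expIic hβ x).1
        (Filter.Eventually.of_forall fun z => (Real.exp_pos _).le), (expIic hβ x).2]
    have e4 : ((‖g x‖₊ : ℝ≥0∞))^2
        ≤ ENNReal.ofReal (2*β*Real.exp (-(β*x)))^2 *
          ((∫⁻ z in Iic x, A z) * ∫⁻ z in Iic x, A z * φ z) := by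
      rw [e1, mul_pow]
      exact mul_le_mul_right ((pow_le_pow_left' e2 2).trans
        (sqCS hAmeas.aemeasurable (hAmeas.mul hφmeas).aemeasurable)) _
    have hid : (2*β*Real.exp (-(β*x)))^2 * (Real.exp (β*x)/β) = 4*β*Real.exp (-(β*x)) := by
      have h0 : Real.exp (-(β*x)) * Real.exp (β*x) = 1 := by
        rw [← Real.exp_add, neg_add_cancel, Real.exp_zero]
      field_simp
      linear_combination 4 * h0
    calc ((‖g x‖₊ : ℝ≥0∞))^2
        ≤ ENNReal.ofReal (2*β*Real.exp (-(β*x)))^2 *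
          (ENNReal.ofReal (Real.exp (β*x)/β) * ∫⁻ z in Iic x, A z * φ z) := by
          rw [← e3]; exact e4
      _ = ENNReal.ofReal (4*β*Real.exp (-(β*x))) * ∫⁻ z in Iic x, A z * φ z := by
          rw [← mul_assoc, ← ENNReal.ofReal_pow hc0, ← ENNReal.ofReal_mul (by positivity), hid]
      _ = ∫⁻ z in Iic x, ENNReal.ofReal (4*β*Real.exp (-(β*x))) * (A z * φ z) :=
          (lintegral_const_mul' _ _ ENNReal.ofReal_ne_top).symm
      _ = ∫⁻ z in Iic x, ENNReal.ofReal (4*β*Real.exp (β*(z-x))) * φ z := by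
          refine lintegral_congr fun z => ?_
          rw [← mul_assoc, ← ENNReal.ofReal_mul (by positivity)]
          congr 2
          rw [mul_assoc, ← Real.exp_add]
          congr 2
          ring
      _ = ∫⁻ z, K x z := by
          rw [← lintegral_indicator measurableSet_Iic]
          refine lintegral_congr fun z => ?_
          by_cases h : z ≤ x <;> simp [hKdef, Set.indicator_apply, h]
  -- Step B : Tonelli
  have hJI : (∫⁻ x, ((‖g x‖₊ : ℝ≥0∞))^2) ≤ 4 * ∫⁻ z, ((‖f z‖₊ : ℝ≥0∞))^2 := by
    have hKmeas : Measurable (Function.uncurry K) := by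
      have hrw : Function.uncurry K = fun p : ℝ × ℝ =>
          if p.2 ≤ p.1 then ENNReal.ofReal (4*β*Real.exp (β*(p.2 - p.1))) * φ p.2 else 0 := rfl
      rw [hrw]
      refine Measurable.ite (measurableSet_le measurable_snd measurable_fst) ?_ measurable_const
      exact (Measurable.ennreal_ofReal (by fun_prop)).mul (hφmeas.comp measurable_snd)
    have swap : (∫⁻ x, ∫⁻ z, K x z) = ∫⁻ z, ∫⁻ x, K x z :=
      lintegral_lintegral_swap hKmeas.aemeasurable
    have inner : ∀ z : ℝ, (∫⁻ x, K x z) = 4 * φ z := by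
      intro z
      have hφne : φ z ≠ ⊤ := by
        simp only [hφdef]; exact ENNReal.pow_ne_top ENNReal.coe_ne_top
      have hi1 : (fun x => K x z) = fun x =>
          (if z ≤ x then ENNReal.ofReal (4*β*Real.exp (β*(z-x))) else 0) * φ z := by
        funext x; by_cases h : z ≤ x <;> simp [hKdef, h]
      have hi2 : (∫⁻ x, if z ≤ x then ENNReal.ofReal (4*β*Real.exp (β*(z-x))) else 0)
          = ENNReal.ofReal 4 := by
        have heq : (fun x => if z ≤ x then ENNReal.ofReal (4*β*Real.exp (β*(z-x))) else 0)
            = fun x => (Ici z).indicator (fun x => ENNReal.ofReal (4*β*Real.exp (β*(z-x)))) x := by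
          funext x; by_cases h : z ≤ x <;> simp [Set.indicator_apply, h]
        have hfeq : (fun x => 4*β*Real.exp (β*(z-x)))
            = fun x => (4*β*Real.exp (β*z)) * Real.exp (-(β*x)) := by
          funext x; rw [show β*(z-x) = β*z + -(β*x) by ring, Real.exp_add]; ring
        have hint : IntegrableOn (fun x => 4*β*Real.exp (β*(z-x))) (Ioi z) volume := by
          rw [hfeq]; exact (expIoi hβ z).1.const_mul _
        rw [heq, lintegral_indicator measurableSet_Ici,
          setLIntegral_congr (Filter.EventuallyEq.symm Ioi_ae_eq_Ici),
          ← ofReal_integral_eq_lintegral_ofReal hint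
            (Filter.Eventually.of_forall fun x => by positivity)]
        congr 1
        have h6 : (∫ x in Ioi z, 4*β*Real.exp (β*(z-x)))
            = (4*β*Real.exp (β*z)) * ∫ x in Ioi z, Real.exp (-(β*x)) := by
          rw [← MeasureTheory.integral_const_mul]
          exact integral_congr_ae (Filter.Eventually.of_forall fun x => by
            show 4*β*Real.exp (β*(z-x)) = (4*β*Real.exp (β*z)) * Real.exp (-(β*x))
            rw [show β*(z-x) = β*z + -(β*x) by ring, Real.exp_add]; ring)
        rw [h6, (expIoi hβ z).2]
        have h0 : Real.exp (β*z) * Real.exp (-(β*z)) = 1 := by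
          rw [← Real.exp_add, add_neg_cancel, Real.exp_zero]
        field_simp
        linear_combination h0
      rw [hi1, lintegral_mul_const' _ _ hφne, hi2]
      rw [show ENNReal.ofReal 4 = (4:ℝ≥0∞) by norm_num]
    calc (∫⁻ x, ((‖g x‖₊ : ℝ≥0∞))^2) ≤ ∫⁻ x, ∫⁻ z, K x z := lintegral_mono stepA
      _ = ∫⁻ z, ∫⁻ x, K x z := swap
      _ = ∫⁻ z, 4 * φ z := lintegral_congr inner
      _ = 4 * ∫⁻ z, φ z := lintegral_const_mul' _ _ (by norm_num)
      _ = 4 * ∫⁻ z, ((‖f z‖₊ : ℝ≥0∞))^2 := by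
          rw [lintegral_congr_ae (hfφ.mono fun z hz => hz.symm)]
  have hgN : eLpNorm g 2 volume ≤ 2 * eLpNorm f 2 volume := by
    rw [eLpNormTwo g, eLpNormTwo f]
    calc (∫⁻ x, ((‖g x‖₊ : ℝ≥0∞))^2)^(1/2:ℝ)
        ≤ (4 * ∫⁻ z, ((‖f z‖₊ : ℝ≥0∞))^2)^(1/2:ℝ) := ENNReal.rpow_le_rpow hJI (by norm_num)
      _ = 2 * (∫⁻ z, ((‖f z‖₊ : ℝ≥0∞))^2)^(1/2:ℝ) := by
          rw [ENNReal.mul_rpow_of_nonneg _ _ (by norm_num)]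
          congr 1
          rw [show (4:ℝ≥0∞) = (2:ℝ≥0∞)^(2:ℕ) by norm_num,
            ← ENNReal.rpow_natCast (2:ℝ≥0∞) 2, ← ENNReal.rpow_mul]
          norm_num
  have hfin : eLpNorm f 2 volume ≠ ⊤ := hcp.2.ne
  have hg2 : MemLp g 2 volume := ⟨hgcont.aestronglyMeasurable,
    lt_of_le_of_lt hgN (ENNReal.mul_lt_top (by norm_num) hcp.2)⟩
  have hsub : MemLp (f - g) 2 volume := hcp.sub hg2
  have heq : (fun x => cm x * hm x) = fun x => f x - g x := funext hfg
  constructor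
  · rw [heq]; exact hsub
  · have hm1 : Real.sqrt (∫ x, (cm x * hm x)^2)
        = (eLpNorm (fun x => cm x * hm x) 2 volume).toReal :=
      sqrtIntSq (by rw [heq]; exact hsub.aestronglyMeasurable)
    rw [hm1, show (∫ x : ℝ, (cp x * hp x)^2) = ∫ x, f x^2 by simp only [hfdef],
      sqrtIntSq hcp.aestronglyMeasurable, heq]
    have t1 : eLpNorm (fun x => f x - g x) 2 volume
        ≤ eLpNorm f 2 volume + eLpNorm g 2 volume := by
      refine le_trans (le_of_eq (eLpNorm_congr_ae
        (Filter.Eventually.of_forall fun x => rfl))) ?_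
      exact eLpNorm_sub_le hcp.aestronglyMeasurable hgcont.aestronglyMeasurable
        (by norm_num : (1:ℝ≥0∞) ≤ 2)
    have t2 : eLpNorm (fun x => f x - g x) 2 volume ≤ 3 * eLpNorm f 2 volume := by
      refine t1.trans ?_
      calc eLpNorm f 2 volume + eLpNorm g 2 volume
          ≤ eLpNorm f 2 volume + 2 * eLpNorm f 2 volume := add_le_add le_rfl hgN
        _ = 3 * eLpNorm f 2 volume := by ring
    calc (eLpNorm (fun x => f x - g x) 2 volume).toReal
        ≤ ((3:ℝ≥0∞) * eLpNorm f 2 volume).toReal :=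
          ENNReal.toReal_mono (ENNReal.mul_ne_top (by norm_num) hfin) t2
      _ = 3 * (eLpNorm f 2 volume).toReal := by
          rw [ENNReal.toReal_mul]; norm_num
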